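/- Let d be an even natural number and h_0,…,h_d real numbers with h_k = h_{d−k} for all 0 ≤ k ≤ d, and let (γ_0,…,γ_{d/2}) be its gamma vector. Then for every 0 ≤ k ≤ d/2, the coefficient of w^k in the polynomial g(2w) := h_{d/2} + 2·Σ_{j=1}^{d/2} h_{d/2−j}·T_j(w) equals Σ_{j=k}^{d/2} γ_{d/2−j}·2^j·C(j,k), where C(j,k) is the binomial coefficient. -/

import Mathlib

open Polynomial Finset

private lemma cheb_eval_aux (x : ℝ) (hx : x ≠ 0) (n : ℕ) :
    (Polynomial.Chebyshev.T ℝ (n : ℤ)).eval ((x + x⁻¹) / 2) = (x ^ n + x⁻¹ ^ n) / 2 := by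
  induction n using Nat.twoStepInduction with
  | zero => simp [Polynomial.Chebyshev.T_zero]
  | one => simp [Polynomial.Chebyshev.T_one]
  | more n ih1 ih2 =>
    rw [show ((n + 2 : ℕ) : ℤ) = (n : ℤ) + 2 by push_cast; ring,
      Polynomial.Chebyshev.T_add_two]
    rw [show ((n : ℤ) + 1) = ((n + 1 : ℕ) : ℤ) by push_cast; ring] at *
    simp only [eval_sub, eval_mul, eval_X, eval_ofNat, ih1, ih2]
    field_simp
    linear_combination (x * x⁻¹ ^ n - x⁻¹ * x⁻¹ ^ n) * mul_inv_cancel₀ hx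

private lemma halfinv_injOn : Set.InjOn (fun x : ℝ => (x + x⁻¹) / 2) (Set.Ioi 1) := by
  have : StrictMonoOn (fun x : ℝ => (x + x⁻¹) / 2) (Set.Ioi 1) := by
    intro a ha b hb hab
    simp only [Set.mem_Ioi] at ha hb
    have ha0 : (0:ℝ) < a := by linarith
    have hb0 : (0:ℝ) < b := by linarith
    have h1 : a⁻¹ - b⁻¹ = (b - a) / (a * b) := by field_simp
    have h2 : (b - a) / (a * b) < b - a := by
      apply div_lt_self (by linarith)
      nlinarith
    simp only
    linarith [h1 ▸ h2]
  exact this.injOn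

/-- Let `d` be even and `h 0, …, h d` a palindromic sequence of reals with gamma vector
`γ 0, …, γ (d/2)` (so that `∑ h k t^k = ∑ γ i t^i (1+t)^(d-2i)`).  Then for every
`0 ≤ k ≤ d/2`, the coefficient of `w^k` in
`g(2w) = h (d/2) + 2 ∑_{j=1}^{d/2} h (d/2-j) · T_j(w)` equals
`∑_{j=k}^{d/2} γ (d/2-j) · 2^j · (j choose k)`. -/
theorem gamma_chebyshev_coeff
    (d : ℕ) (hd : Even d) (h γ : ℕ → ℝ)
    (hsym : ∀ k ≤ d, h k = h (d - k))
    (hgamma : ∑ k ∈ Finset.range (d + 1), C (h k) * X ^ k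
      = ∑ i ∈ Finset.range (d / 2 + 1), C (γ i) * X ^ i * (1 + X) ^ (d - 2 * i)) :
    ∀ k ≤ d / 2,
      (C (h (d / 2)) +
          2 * ∑ j ∈ Finset.Icc 1 (d / 2),
            C (h (d / 2 - j)) * Polynomial.Chebyshev.T ℝ (j : ℤ)).coeff k
        = ∑ j ∈ Finset.Icc k (d / 2), γ (d / 2 - j) * 2 ^ j * (Nat.choose j k) := by
  intro k hk
  set n := d / 2 with hn
  have hdn : d = 2 * n := by obtain ⟨m, hm⟩ := hd; omega
  set P : ℝ[X] := C (h n) + 2 * ∑ j ∈ Finset.Icc 1 n,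
      C (h (n - j)) * Polynomial.Chebyshev.T ℝ (j : ℤ) with hP
  set Q : ℝ[X] := ∑ j ∈ Finset.range (n + 1), C (γ (n - j) * 2 ^ j) * (1 + X) ^ j with hQ
  have hPQ : P = Q := by
    apply Polynomial.eq_of_infinite_eval_eq
    apply Set.Infinite.mono
      (s := (fun x : ℝ => (x + x⁻¹) / 2) '' Set.Ioi 1)
    · rintro _ ⟨x, hx1, rfl⟩
      simp only [Set.mem_Ioi] at hx1
      have hx0 : (0:ℝ) < x := by linarith
      have hx : x ≠ 0 := ne_of_gt hx0
      have hxn : x ^ n ≠ 0 := pow_ne_zero _ hx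
      set w : ℝ := (x + x⁻¹) / 2 with hw
      simp only [Set.mem_setOf_eq]
      apply mul_left_cancel₀ hxn
      have hA : x ^ n * Polynomial.eval w P = ∑ k ∈ Finset.range (d + 1), h k * x ^ k := by
        have e1 : Polynomial.eval w P
            = h n + ∑ j ∈ Finset.Icc 1 n, h (n - j) * (x ^ j + x⁻¹ ^ j) := by
          simp only [hP, eval_add, eval_mul, eval_C, eval_ofNat, eval_finset_sum]
          rw [Finset.mul_sum]
          congr 1
          apply Finset.sum_congr rfl
          intro j hj
          rw [cheb_eval_aux x hx]
          ring
        rw [e1, mul_add, Finset.mul_sum]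
        have e2 : ∀ j ∈ Finset.Icc 1 n, x ^ n * (h (n - j) * (x ^ j + x⁻¹ ^ j))
            = h (n - j) * x ^ (n - j) + h (n - j) * x ^ (n + j) := by
          intro j hj
          simp only [Finset.mem_Icc] at hj
          have h1 : x ^ (n - j) * x ^ j = x ^ n := by
            rw [← pow_add]; congr 1; omega
          have h2 : x ^ n * x⁻¹ ^ j = x ^ (n - j) := by
            rw [← h1, mul_assoc, ← mul_pow, mul_inv_cancel₀ hx, one_pow, mul_one]
          have h3 : x ^ n * x ^ j = x ^ (n + j) := by rw [← pow_add]
          linear_combination h (n - j) * h2 + h (n - j) * h3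
        rw [Finset.sum_congr rfl e2]
        -- now split the RHS
        have split : ∑ k ∈ Finset.range (d + 1), h k * x ^ k
            = (∑ k ∈ Finset.range (n + 1), h k * x ^ k)
              + ∑ k ∈ Finset.Ico (n + 1) (d + 1), h k * x ^ k := by
          rw [Finset.range_eq_Ico,
            ← Finset.sum_Ico_consecutive _ (by omega : 0 ≤ n + 1) (by omega : n + 1 ≤ d + 1), Finset.range_eq_Ico]
        have part1 : ∑ k ∈ Finset.range (n + 1), h k * x ^ k
            = h n * x ^ n + ∑ j ∈ Finset.Icc 1 n, h (n - j) * x ^ (n - j) := by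
          rw [← Finset.sum_range_reflect (fun k => h k * x ^ k) (n + 1)]
          rw [Finset.sum_range_succ']
          simp only [Nat.add_sub_cancel, Nat.sub_zero]
          rw [add_comm]
          congr 1
          rw [← Finset.Ico_add_one_right_eq_Icc, Finset.sum_Ico_eq_sum_range]
          apply Finset.sum_congr (by congr 1)
          intro i _
          congr 2 <;> omega
        have part2 : ∑ k ∈ Finset.Ico (n + 1) (d + 1), h k * x ^ k
            = ∑ j ∈ Finset.Icc 1 n, h (n - j) * x ^ (n + j) := by
          rw [Finset.sum_Ico_eq_sum_range, ← Finset.Ico_add_one_right_eq_Icc,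
            Finset.sum_Ico_eq_sum_range]
          apply Finset.sum_congr (by congr 1 <;> omega)
          intro i hi
          simp only [Finset.mem_range] at hi
          have hsymi : h (n + 1 + i) = h (n - (1 + i)) := by
            rw [hsym (n + 1 + i) (by omega)]
            congr 1
            omega
          rw [hsymi]
          congr 2
          omega
        rw [split, part1, part2, Finset.sum_add_distrib]
        ring
      have hB : x ^ n * Polynomial.eval w Q
          = ∑ i ∈ Finset.range (n + 1), γ i * x ^ i * (1 + x) ^ (d - 2 * i) := by
        have e1 : Polynomial.eval w Q
            = ∑ j ∈ Finset.range (n + 1), γ (n - j) * 2 ^ j * (1 + w) ^ j := by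
          simp only [hQ, eval_finset_sum, eval_mul, eval_C, eval_pow, eval_add, eval_one,
            eval_X]
        have hsq : (1 + x) ^ 2 = x * (2 * (1 + w)) := by
          rw [hw]; field_simp; ring
        rw [e1, Finset.mul_sum]
        rw [← Finset.sum_range_reflect (fun i => γ i * x ^ i * (1 + x) ^ (d - 2 * i)) (n + 1)]
        apply Finset.sum_congr rfl
        intro j hj
        simp only [Finset.mem_range] at hj
        have hjn : j ≤ n := by omega
        have h1 : x ^ (n - j) * x ^ j = x ^ n := by rw [← pow_add]; congr 1; omega
        simp only [Nat.add_sub_cancel]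
        calc x ^ n * (γ (n - j) * 2 ^ j * (1 + w) ^ j)
            = γ (n - j) * x ^ (n - j) * (x * (2 * (1 + w))) ^ j := by
              rw [mul_pow, mul_pow, ← h1]; ring
          _ = γ (n - j) * x ^ (n - j) * ((1 + x) ^ 2) ^ j := by rw [← hsq]
          _ = γ (n - j) * x ^ (n - j) * (1 + x) ^ (2 * j) := by rw [← pow_mul]
          _ = γ (n - j) * x ^ (n - j) * (1 + x) ^ (d - 2 * (n - j)) := by
              congr 1
              congr 1
              omega
      have hAB : ∑ k ∈ Finset.range (d + 1), h k * x ^ k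
          = ∑ i ∈ Finset.range (n + 1), γ i * x ^ i * (1 + x) ^ (d - 2 * i) := by
        have := congrArg (Polynomial.eval x) hgamma
        simpa only [eval_finset_sum, eval_mul, eval_pow, eval_C, eval_X, eval_add,
          eval_one, hn] using this
      rw [hA, hB, hAB]
    · exact Set.Infinite.image halfinv_injOn (Set.Ioi_infinite 1)
  rw [hPQ, hQ, Polynomial.finset_sum_coeff]
  simp only [Polynomial.coeff_C_mul, Polynomial.coeff_one_add_X_pow]
  rw [Finset.sum_congr rfl (fun j _ => by
    show γ (n - j) * 2 ^ j * ((j.choose k : ℝ)) = _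
    rfl)]
  symm
  apply Finset.sum_subset
  · intro j hj
    simp only [Finset.mem_Icc] at hj
    simp only [Finset.mem_range]
    omega
  · intro j hj hj2
    simp only [Finset.mem_range] at hj
    simp only [Finset.mem_Icc] at hj2
    have : j < k := by omega
    rw [Nat.choose_eq_zero_of_lt this]
    simp
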